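/- Let Γ be the graph with five vertexes: a 4-cycle a — b — a' — b' — a with f(a) = f(a') = 9, f(b) = f(b') = 1, plus a central vertex c with f(c) = 2 adjacent to all of a, b, a', b'; all eight edge weights equal 1. Call a 2-partition of type D if one district is {c, x} with x ∈ {a, a'} (cut energy 5, deviation energy 0), of type M if one district is a weight-9 vertex together with one adjacent weight-1 vertex (cut energy 4, deviation energy √2), and of type C if one district is a single weight-9 vertex (cut energy 3, deviation energy 2√2). Then: for every λ ∈ [0, 2−√2) the minimal 2-partitions of F_λ are exactly those of type D; at λ = 2−√2 the partitions of types D, M and C all minimize F_λ; and for every λ ∈ (2−√2, 1) the minimal 2-partitions are exactly those of type C. -/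
import Mathlib


open Finset

namespace Districting

variable {V : Type*} [Fintype V] [DecidableEq V]

/-- An `N`-partition of a graph `G`: a family of `N` pairwise disjoint sets of
vertexes covering all of `V`, each inducing a connected subgraph of `G`. -/
structure Partition (G : SimpleGraph V) (N : ℕ) where
  part : Fin N → Finset V
  disj : ∀ k l, k ≠ l → Disjoint (part k) (part l)
  covers : ∀ v : V, ∃ k, v ∈ part k
  connected : ∀ k, (G.induce (part k : Set V)).Connected

/-- The mass of a set of vertexes w.r.t. the vertex weight `f`. -/
def mass (f : V → ℝ) (s : Finset V) : ℝ := ∑ v ∈ s, f v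

/-- The total mass of the graph w.r.t. the vertex weight `f`. -/
def totalMass (f : V → ℝ) : ℝ := ∑ v : V, f v

open Classical in
/-- The cut (perimeter) energy of a partition: the sum of the weights of edges
whose endpoints lie in different parts. -/
noncomputable def cutEnergy (G : SimpleGraph V) (g : Sym2 V → ℝ) {N : ℕ}
    (P : Partition G N) : ℝ :=
  ∑ e : Sym2 V,
    if e ∈ G.edgeSet ∧ ∀ k, ¬ (∀ v ∈ e, v ∈ P.part k) then g e else 0

/-- The deviation energy of a partition: the standard deviation of the masses
from the mean mass. -/
noncomputable def deviation {G : SimpleGraph V} (f : V → ℝ) {N : ℕ}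
    (P : Partition G N) : ℝ :=
  Real.sqrt (∑ k : Fin N, (mass f (P.part k) - totalMass f / (N : ℝ)) ^ 2)

/-- The energy functional `F_λ`. -/
noncomputable def energy (G : SimpleGraph V) (f : V → ℝ) (g : Sym2 V → ℝ)
    (lam : ℝ) {N : ℕ} (P : Partition G N) : ℝ :=
  lam * cutEnergy G g P + (1 - lam) * deviation f P

end Districting

namespace Districting

/-- The 4-cycle `a — b — a' — b' — a` (`a = 0`, `b = 1`, `a' = 2`, `b' = 3`)
together with a central vertex `c = 4` adjacent to all four cycle vertexes. -/
def wheelGraph5 : SimpleGraph (Fin 5) :=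
  SimpleGraph.fromRel (fun u v =>
    ((u, v) = (0, 1) ∨ (u, v) = (1, 2) ∨ (u, v) = (2, 3) ∨ (u, v) = (3, 0)) ∨
      (u = 4 ∧ (v = 0 ∨ v = 1 ∨ v = 2 ∨ v = 3)))

/-- Type `D`: one district is the central vertex together with a weight-9 vertex. -/
def typeD (P : Partition wheelGraph5 2) : Prop :=
  ∃ k, P.part k = ({4, 0} : Finset (Fin 5)) ∨ P.part k = ({4, 2} : Finset (Fin 5))

/-- Type `M`: one district is a weight-9 vertex with one adjacent weight-1 vertex. -/
def typeM (P : Partition wheelGraph5 2) : Prop :=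
  ∃ k, P.part k = ({0, 1} : Finset (Fin 5)) ∨ P.part k = ({0, 3} : Finset (Fin 5)) ∨
    P.part k = ({2, 1} : Finset (Fin 5)) ∨ P.part k = ({2, 3} : Finset (Fin 5))

/-- Type `C`: one district is a single weight-9 vertex. -/
def typeC (P : Partition wheelGraph5 2) : Prop :=
  ∃ k, P.part k = ({0} : Finset (Fin 5)) ∨ P.part k = ({2} : Finset (Fin 5))

instance : DecidableRel wheelGraph5.Adj := fun u v =>
  decidable_of_iff _ (SimpleGraph.fromRel_adj _ u v).symm

private lemma fin2_cases : ∀ k : Fin 2, k = 0 ∨ k = 1 := by decide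

lemma part1_eq (P : Partition wheelGraph5 2) : P.part 1 = (P.part 0)ᶜ := by
  ext v
  simp only [Finset.mem_compl]
  constructor
  · intro hv hv0
    exact (Finset.disjoint_left.mp (P.disj 0 1 (by decide)) hv0) hv
  · intro hv
    obtain ⟨k, hk⟩ := P.covers v
    rcases fin2_cases k with rfl | rfl
    · exact absurd hk hv
    · exact hk

def validSets : Finset (Finset (Fin 5)) :=
  { {0},{1},{2},{3},{0,1},{1,2},{2,3},{0,3},{0,1,2},{1,2,3},{0,2,3},{0,1,3},
    {0,1,2,3},{1,2,3,4},{0,2,3,4},{0,1,3,4},{0,1,2,4},{2,3,4},{0,3,4},{0,1,4},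
    {1,2,4},{3,4},{0,4},{1,4},{2,4},{4} }

private lemma aux_bad : ∀ S : Finset (Fin 5), S ∉ validSets →
    S = ∅ ∨ S = Finset.univ ∨ S = {0,2} ∨ S = {1,3} ∨ S = {0,2,4} ∨ S = {1,3,4} := by
  decide

private lemma notPre02 :
    ¬ (wheelGraph5.induce (↑({0,2} : Finset (Fin 5)) : Set (Fin 5))).Preconnected := by decide

private lemma notPre13 :
    ¬ (wheelGraph5.induce (↑({1,3} : Finset (Fin 5)) : Set (Fin 5))).Preconnected := by decide

lemma mem_valid (P : Partition wheelGraph5 2) : P.part 0 ∈ validSets := by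
  by_contra h
  have h1 := P.connected 0
  have h2 := P.connected 1
  rw [part1_eq P] at h2
  rcases aux_bad _ h with hS | hS | hS | hS | hS | hS <;> rw [hS] at h1 h2
  · obtain ⟨⟨v, hv⟩⟩ := h1.nonempty
    simp at hv
  · rw [show (Finset.univ : Finset (Fin 5))ᶜ = ∅ from by decide] at h2
    obtain ⟨⟨v, hv⟩⟩ := h2.nonempty
    simp at hv
  · exact notPre02 h1.preconnected
  · exact notPre13 h1.preconnected
  · rw [show ({0,2,4} : Finset (Fin 5))ᶜ = {1,3} from by decide] at h2
    exact notPre13 h2.preconnected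
  · rw [show ({1,3,4} : Finset (Fin 5))ᶜ = {0,2} from by decide] at h2
    exact notPre02 h2.preconnected

private lemma compl_inv {S A B : Finset (Fin 5)} (h : Sᶜ = A) (hAB : Aᶜ = B) : S = B := by
  rw [← hAB, ← h, compl_compl]

lemma typeD_iff (P : Partition wheelGraph5 2) :
    typeD P ↔ (P.part 0 = {4,0} ∨ P.part 0 = {4,2} ∨
      P.part 0 = {1,2,3} ∨ P.part 0 = {0,1,3}) := by
  constructor
  · rintro ⟨k, hk⟩
    rcases fin2_cases k with rfl | rfl
    · rcases hk with hk | hk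
      · exact Or.inl hk
      · exact Or.inr (Or.inl hk)
    · rw [part1_eq P] at hk
      rcases hk with hk | hk
      · exact Or.inr (Or.inr (Or.inl (compl_inv hk (by decide))))
      · exact Or.inr (Or.inr (Or.inr (compl_inv hk (by decide))))
  · rintro (h | h | h | h)
    · exact ⟨0, Or.inl h⟩
    · exact ⟨0, Or.inr h⟩
    · exact ⟨1, by rw [part1_eq P, h]; decide⟩
    · exact ⟨1, by rw [part1_eq P, h]; decide⟩

lemma typeM_iff (P : Partition wheelGraph5 2) :
    typeM P ↔ (P.part 0 = {0,1} ∨ P.part 0 = {0,3} ∨ P.part 0 = {2,1} ∨ P.part 0 = {2,3} ∨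
      P.part 0 = {2,3,4} ∨ P.part 0 = {1,2,4} ∨ P.part 0 = {0,3,4} ∨ P.part 0 = {0,1,4}) := by
  constructor
  · rintro ⟨k, hk⟩
    rcases fin2_cases k with rfl | rfl
    · rcases hk with hk | hk | hk | hk
      · exact Or.inl hk
      · exact Or.inr (Or.inl hk)
      · exact Or.inr (Or.inr (Or.inl hk))
      · exact Or.inr (Or.inr (Or.inr (Or.inl hk)))
    · rw [part1_eq P] at hk
      rcases hk with hk | hk | hk | hk
      · exact Or.inr (Or.inr (Or.inr (Or.inr (Or.inl (compl_inv hk (by decide))))))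
      · exact Or.inr (Or.inr (Or.inr (Or.inr (Or.inr (Or.inl (compl_inv hk (by decide)))))))
      · exact Or.inr (Or.inr (Or.inr (Or.inr (Or.inr (Or.inr (Or.inl (compl_inv hk (by decide))))))))
      · exact Or.inr (Or.inr (Or.inr (Or.inr (Or.inr (Or.inr (Or.inr (compl_inv hk (by decide))))))))
  · rintro (h | h | h | h | h | h | h | h)
    · exact ⟨0, by rw [h]; decide⟩
    · exact ⟨0, by rw [h]; decide⟩
    · exact ⟨0, by rw [h]; decide⟩
    · exact ⟨0, by rw [h]; decide⟩
    · exact ⟨1, by rw [part1_eq P, h]; decide⟩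
    · exact ⟨1, by rw [part1_eq P, h]; decide⟩
    · exact ⟨1, by rw [part1_eq P, h]; decide⟩
    · exact ⟨1, by rw [part1_eq P, h]; decide⟩

lemma typeC_iff (P : Partition wheelGraph5 2) :
    typeC P ↔ (P.part 0 = {0} ∨ P.part 0 = {2} ∨
      P.part 0 = {1,2,3,4} ∨ P.part 0 = {0,1,3,4}) := by
  constructor
  · rintro ⟨k, hk⟩
    rcases fin2_cases k with rfl | rfl
    · rcases hk with hk | hk
      · exact Or.inl hk
      · exact Or.inr (Or.inl hk)
    · rw [part1_eq P] at hk
      rcases hk with hk | hk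
      · exact Or.inr (Or.inr (Or.inl (compl_inv hk (by decide))))
      · exact Or.inr (Or.inr (Or.inr (compl_inv hk (by decide))))
  · rintro (h | h | h | h)
    · exact ⟨0, Or.inl h⟩
    · exact ⟨0, Or.inr h⟩
    · exact ⟨1, by rw [part1_eq P, h]; decide⟩
    · exact ⟨1, by rw [part1_eq P, h]; decide⟩

def cross (S : Finset (Fin 5)) : ℕ :=
  (Finset.univ.filter (fun e : Sym2 (Fin 5) =>
    e ∈ wheelGraph5.edgeSet ∧ ¬ (∀ v ∈ e, v ∈ S) ∧ ¬ (∀ v ∈ e, v ∈ Sᶜ))).card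

lemma cutEnergy_eq (g : Sym2 (Fin 5) → ℝ) (hg : ∀ e ∈ wheelGraph5.edgeSet, g e = 1)
    (P : Partition wheelGraph5 2) :
    cutEnergy wheelGraph5 g P = (cross (P.part 0) : ℝ) := by
  unfold cutEnergy cross
  rw [Finset.card_filter]
  push_cast
  apply Finset.sum_congr rfl
  intro e _
  have hcond : (e ∈ wheelGraph5.edgeSet ∧ ∀ k : Fin 2, ¬ (∀ v ∈ e, v ∈ P.part k)) ↔
      (e ∈ wheelGraph5.edgeSet ∧ ¬ (∀ v ∈ e, v ∈ P.part 0) ∧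
        ¬ (∀ v ∈ e, v ∈ (P.part 0)ᶜ)) := by
    rw [Fin.forall_fin_two, part1_eq]
  simp only [hcond]
  split_ifs with hc
  · exact hg e hc.1
  · rfl

lemma totalMass_eq (f : Fin 5 → ℝ) (hf₀ : f 0 = 9) (hf₁ : f 1 = 1) (hf₂ : f 2 = 9)
    (hf₃ : f 3 = 1) (hf₄ : f 4 = 2) : totalMass f = 22 := by
  rw [totalMass, Fin.sum_univ_five, hf₀, hf₁, hf₂, hf₃, hf₄]
  norm_num

lemma energy_eq (f : Fin 5 → ℝ) (hf₀ : f 0 = 9) (hf₁ : f 1 = 1) (hf₂ : f 2 = 9)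
    (hf₃ : f 3 = 1) (hf₄ : f 4 = 2)
    (g : Sym2 (Fin 5) → ℝ) (hg : ∀ e ∈ wheelGraph5.edgeSet, g e = 1)
    (lam : ℝ) (P : Partition wheelGraph5 2) :
    energy wheelGraph5 f g lam P =
      lam * (cross (P.part 0) : ℝ) +
        (1 - lam) * Real.sqrt ((mass f (P.part 0) - 11) ^ 2 +
          (mass f ((P.part 0)ᶜ) - 11) ^ 2) := by
  rw [energy, cutEnergy_eq g hg P, deviation, totalMass_eq f hf₀ hf₁ hf₂ hf₃ hf₄,
    Fin.sum_univ_two, part1_eq P]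
  norm_num

private lemma sqrt8 : Real.sqrt 8 = 2 * Real.sqrt 2 := by
  rw [show (8:ℝ) = 2 ^ 2 * 2 by norm_num, Real.sqrt_mul (by positivity),
    Real.sqrt_sq (by norm_num)]

private lemma sqrt128 : Real.sqrt 128 = 8 * Real.sqrt 2 := by
  rw [show (128:ℝ) = 8 ^ 2 * 2 by norm_num, Real.sqrt_mul (by positivity),
    Real.sqrt_sq (by norm_num)]

private lemma sqrt162 : Real.sqrt 162 = 9 * Real.sqrt 2 := by
  rw [show (162:ℝ) = 9 ^ 2 * 2 by norm_num, Real.sqrt_mul (by positivity),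
    Real.sqrt_sq (by norm_num)]

private lemma sqrt200 : Real.sqrt 200 = 10 * Real.sqrt 2 := by
  rw [show (200:ℝ) = 10 ^ 2 * 2 by norm_num, Real.sqrt_mul (by positivity),
    Real.sqrt_sq (by norm_num)]

lemma energy_val (f : Fin 5 → ℝ) (hf₀ : f 0 = 9) (hf₁ : f 1 = 1) (hf₂ : f 2 = 9)
    (hf₃ : f 3 = 1) (hf₄ : f 4 = 2)
    (g : Sym2 (Fin 5) → ℝ) (hg : ∀ e ∈ wheelGraph5.edgeSet, g e = 1)
    (lam : ℝ) (P : Partition wheelGraph5 2) :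
    (typeD P ∧ energy wheelGraph5 f g lam P = 5*lam) ∨
    (typeM P ∧ energy wheelGraph5 f g lam P = 4*lam + (1-lam)*Real.sqrt 2) ∨
    (typeC P ∧ energy wheelGraph5 f g lam P = 3*lam + (1-lam)*(2*Real.sqrt 2)) ∨
    (¬ typeD P ∧ ¬ typeM P ∧ ¬ typeC P ∧
      (energy wheelGraph5 f g lam P = 3*lam + (1-lam)*(10*Real.sqrt 2) ∨
       energy wheelGraph5 f g lam P = 5*lam + (1-lam)*(8*Real.sqrt 2) ∨
       energy wheelGraph5 f g lam P = 4*lam + (1-lam)*(9*Real.sqrt 2))) := by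
  have hmem := mem_valid P
  simp only [validSets, Finset.mem_insert, Finset.mem_singleton] at hmem
  rcases hmem with h|h|h|h|h|h|h|h|h|h|h|h|h|h|h|h|h|h|h|h|h|h|h|h|h|h

  · refine Or.inr (Or.inr (Or.inl ⟨⟨0, by rw [h]; decide⟩, ?_⟩))
    rw [energy_eq f hf₀ hf₁ hf₂ hf₃ hf₄ g hg lam P, h,
        show ({0} : Finset (Fin 5))ᶜ = ({1,2,3,4} : Finset (Fin 5)) from by decide,
        show cross ({0} : Finset (Fin 5)) = 3 from by decide,
        show mass f ({0} : Finset (Fin 5)) = 9 from (by simp [mass, Finset.sum_insert, Finset.mem_insert, hf₀, hf₁, hf₂, hf₃, hf₄]; try norm_num),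
        show mass f ({1,2,3,4} : Finset (Fin 5)) = 13 from (by simp [mass, Finset.sum_insert, Finset.mem_insert, hf₀, hf₁, hf₂, hf₃, hf₄]; try norm_num)]
    norm_num [sqrt8]
    try ring
  · refine Or.inr (Or.inr (Or.inr ⟨by rw [typeD_iff P, h]; decide, by rw [typeM_iff P, h]; decide, by rw [typeC_iff P, h]; decide, Or.inl ?_⟩))
    rw [energy_eq f hf₀ hf₁ hf₂ hf₃ hf₄ g hg lam P, h,
        show ({1} : Finset (Fin 5))ᶜ = ({0,2,3,4} : Finset (Fin 5)) from by decide,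
        show cross ({1} : Finset (Fin 5)) = 3 from by decide,
        show mass f ({1} : Finset (Fin 5)) = 1 from (by simp [mass, Finset.sum_insert, Finset.mem_insert, hf₀, hf₁, hf₂, hf₃, hf₄]; try norm_num),
        show mass f ({0,2,3,4} : Finset (Fin 5)) = 21 from (by simp [mass, Finset.sum_insert, Finset.mem_insert, hf₀, hf₁, hf₂, hf₃, hf₄]; try norm_num)]
    norm_num [sqrt200]
    try ring
  · refine Or.inr (Or.inr (Or.inl ⟨⟨0, by rw [h]; decide⟩, ?_⟩))
    rw [energy_eq f hf₀ hf₁ hf₂ hf₃ hf₄ g hg lam P, h,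
        show ({2} : Finset (Fin 5))ᶜ = ({0,1,3,4} : Finset (Fin 5)) from by decide,
        show cross ({2} : Finset (Fin 5)) = 3 from by decide,
        show mass f ({2} : Finset (Fin 5)) = 9 from (by simp [mass, Finset.sum_insert, Finset.mem_insert, hf₀, hf₁, hf₂, hf₃, hf₄]; try norm_num),
        show mass f ({0,1,3,4} : Finset (Fin 5)) = 13 from (by simp [mass, Finset.sum_insert, Finset.mem_insert, hf₀, hf₁, hf₂, hf₃, hf₄]; try norm_num)]
    norm_num [sqrt8]
    try ring
  · refine Or.inr (Or.inr (Or.inr ⟨by rw [typeD_iff P, h]; decide, by rw [typeM_iff P, h]; decide, by rw [typeC_iff P, h]; decide, Or.inl ?_⟩))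
    rw [energy_eq f hf₀ hf₁ hf₂ hf₃ hf₄ g hg lam P, h,
        show ({3} : Finset (Fin 5))ᶜ = ({0,1,2,4} : Finset (Fin 5)) from by decide,
        show cross ({3} : Finset (Fin 5)) = 3 from by decide,
        show mass f ({3} : Finset (Fin 5)) = 1 from (by simp [mass, Finset.sum_insert, Finset.mem_insert, hf₀, hf₁, hf₂, hf₃, hf₄]; try norm_num),
        show mass f ({0,1,2,4} : Finset (Fin 5)) = 21 from (by simp [mass, Finset.sum_insert, Finset.mem_insert, hf₀, hf₁, hf₂, hf₃, hf₄]; try norm_num)]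
    norm_num [sqrt200]
    try ring
  · refine Or.inr (Or.inl ⟨⟨0, by rw [h]; decide⟩, ?_⟩)
    rw [energy_eq f hf₀ hf₁ hf₂ hf₃ hf₄ g hg lam P, h,
        show ({0,1} : Finset (Fin 5))ᶜ = ({2,3,4} : Finset (Fin 5)) from by decide,
        show cross ({0,1} : Finset (Fin 5)) = 4 from by decide,
        show mass f ({0,1} : Finset (Fin 5)) = 10 from (by simp [mass, Finset.sum_insert, Finset.mem_insert, hf₀, hf₁, hf₂, hf₃, hf₄]; try norm_num),
        show mass f ({2,3,4} : Finset (Fin 5)) = 12 from (by simp [mass, Finset.sum_insert, Finset.mem_insert, hf₀, hf₁, hf₂, hf₃, hf₄]; try norm_num)]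
    norm_num
    try ring
  · refine Or.inr (Or.inl ⟨⟨0, by rw [h]; decide⟩, ?_⟩)
    rw [energy_eq f hf₀ hf₁ hf₂ hf₃ hf₄ g hg lam P, h,
        show ({1,2} : Finset (Fin 5))ᶜ = ({0,3,4} : Finset (Fin 5)) from by decide,
        show cross ({1,2} : Finset (Fin 5)) = 4 from by decide,
        show mass f ({1,2} : Finset (Fin 5)) = 10 from (by simp [mass, Finset.sum_insert, Finset.mem_insert, hf₀, hf₁, hf₂, hf₃, hf₄]; try norm_num),
        show mass f ({0,3,4} : Finset (Fin 5)) = 12 from (by simp [mass, Finset.sum_insert, Finset.mem_insert, hf₀, hf₁, hf₂, hf₃, hf₄]; try norm_num)]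
    norm_num
    try ring
  · refine Or.inr (Or.inl ⟨⟨0, by rw [h]; decide⟩, ?_⟩)
    rw [energy_eq f hf₀ hf₁ hf₂ hf₃ hf₄ g hg lam P, h,
        show ({2,3} : Finset (Fin 5))ᶜ = ({0,1,4} : Finset (Fin 5)) from by decide,
        show cross ({2,3} : Finset (Fin 5)) = 4 from by decide,
        show mass f ({2,3} : Finset (Fin 5)) = 10 from (by simp [mass, Finset.sum_insert, Finset.mem_insert, hf₀, hf₁, hf₂, hf₃, hf₄]; try norm_num),
        show mass f ({0,1,4} : Finset (Fin 5)) = 12 from (by simp [mass, Finset.sum_insert, Finset.mem_insert, hf₀, hf₁, hf₂, hf₃, hf₄]; try norm_num)]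
    norm_num
    try ring
  · refine Or.inr (Or.inl ⟨⟨0, by rw [h]; decide⟩, ?_⟩)
    rw [energy_eq f hf₀ hf₁ hf₂ hf₃ hf₄ g hg lam P, h,
        show ({0,3} : Finset (Fin 5))ᶜ = ({1,2,4} : Finset (Fin 5)) from by decide,
        show cross ({0,3} : Finset (Fin 5)) = 4 from by decide,
        show mass f ({0,3} : Finset (Fin 5)) = 10 from (by simp [mass, Finset.sum_insert, Finset.mem_insert, hf₀, hf₁, hf₂, hf₃, hf₄]; try norm_num),
        show mass f ({1,2,4} : Finset (Fin 5)) = 12 from (by simp [mass, Finset.sum_insert, Finset.mem_insert, hf₀, hf₁, hf₂, hf₃, hf₄]; try norm_num)]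
    norm_num
    try ring
  · refine Or.inr (Or.inr (Or.inr ⟨by rw [typeD_iff P, h]; decide, by rw [typeM_iff P, h]; decide, by rw [typeC_iff P, h]; decide, Or.inr (Or.inl ?_)⟩))
    rw [energy_eq f hf₀ hf₁ hf₂ hf₃ hf₄ g hg lam P, h,
        show ({0,1,2} : Finset (Fin 5))ᶜ = ({3,4} : Finset (Fin 5)) from by decide,
        show cross ({0,1,2} : Finset (Fin 5)) = 5 from by decide,
        show mass f ({0,1,2} : Finset (Fin 5)) = 19 from (by simp [mass, Finset.sum_insert, Finset.mem_insert, hf₀, hf₁, hf₂, hf₃, hf₄]; try norm_num),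
        show mass f ({3,4} : Finset (Fin 5)) = 3 from (by simp [mass, Finset.sum_insert, Finset.mem_insert, hf₀, hf₁, hf₂, hf₃, hf₄]; try norm_num)]
    norm_num [sqrt128]
    try ring
  · refine Or.inl ⟨⟨1, by rw [part1_eq P, h]; decide⟩, ?_⟩
    rw [energy_eq f hf₀ hf₁ hf₂ hf₃ hf₄ g hg lam P, h,
        show ({1,2,3} : Finset (Fin 5))ᶜ = ({0,4} : Finset (Fin 5)) from by decide,
        show cross ({1,2,3} : Finset (Fin 5)) = 5 from by decide,
        show mass f ({1,2,3} : Finset (Fin 5)) = 11 from (by simp [mass, Finset.sum_insert, Finset.mem_insert, hf₀, hf₁, hf₂, hf₃, hf₄]; try norm_num),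
        show mass f ({0,4} : Finset (Fin 5)) = 11 from (by simp [mass, Finset.sum_insert, Finset.mem_insert, hf₀, hf₁, hf₂, hf₃, hf₄]; try norm_num)]
    norm_num
    try ring
  · refine Or.inr (Or.inr (Or.inr ⟨by rw [typeD_iff P, h]; decide, by rw [typeM_iff P, h]; decide, by rw [typeC_iff P, h]; decide, Or.inr (Or.inl ?_)⟩))
    rw [energy_eq f hf₀ hf₁ hf₂ hf₃ hf₄ g hg lam P, h,
        show ({0,2,3} : Finset (Fin 5))ᶜ = ({1,4} : Finset (Fin 5)) from by decide,
        show cross ({0,2,3} : Finset (Fin 5)) = 5 from by decide,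
        show mass f ({0,2,3} : Finset (Fin 5)) = 19 from (by simp [mass, Finset.sum_insert, Finset.mem_insert, hf₀, hf₁, hf₂, hf₃, hf₄]; try norm_num),
        show mass f ({1,4} : Finset (Fin 5)) = 3 from (by simp [mass, Finset.sum_insert, Finset.mem_insert, hf₀, hf₁, hf₂, hf₃, hf₄]; try norm_num)]
    norm_num [sqrt128]
    try ring
  · refine Or.inl ⟨⟨1, by rw [part1_eq P, h]; decide⟩, ?_⟩
    rw [energy_eq f hf₀ hf₁ hf₂ hf₃ hf₄ g hg lam P, h,
        show ({0,1,3} : Finset (Fin 5))ᶜ = ({2,4} : Finset (Fin 5)) from by decide,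
        show cross ({0,1,3} : Finset (Fin 5)) = 5 from by decide,
        show mass f ({0,1,3} : Finset (Fin 5)) = 11 from (by simp [mass, Finset.sum_insert, Finset.mem_insert, hf₀, hf₁, hf₂, hf₃, hf₄]; try norm_num),
        show mass f ({2,4} : Finset (Fin 5)) = 11 from (by simp [mass, Finset.sum_insert, Finset.mem_insert, hf₀, hf₁, hf₂, hf₃, hf₄]; try norm_num)]
    norm_num
    try ring
  · refine Or.inr (Or.inr (Or.inr ⟨by rw [typeD_iff P, h]; decide, by rw [typeM_iff P, h]; decide, by rw [typeC_iff P, h]; decide, Or.inr (Or.inr ?_)⟩))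
    rw [energy_eq f hf₀ hf₁ hf₂ hf₃ hf₄ g hg lam P, h,
        show ({0,1,2,3} : Finset (Fin 5))ᶜ = ({4} : Finset (Fin 5)) from by decide,
        show cross ({0,1,2,3} : Finset (Fin 5)) = 4 from by decide,
        show mass f ({0,1,2,3} : Finset (Fin 5)) = 20 from (by simp [mass, Finset.sum_insert, Finset.mem_insert, hf₀, hf₁, hf₂, hf₃, hf₄]; try norm_num),
        show mass f ({4} : Finset (Fin 5)) = 2 from (by simp [mass, Finset.sum_insert, Finset.mem_insert, hf₀, hf₁, hf₂, hf₃, hf₄]; try norm_num)]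
    norm_num [sqrt162]
    try ring
  · refine Or.inr (Or.inr (Or.inl ⟨⟨1, by rw [part1_eq P, h]; decide⟩, ?_⟩))
    rw [energy_eq f hf₀ hf₁ hf₂ hf₃ hf₄ g hg lam P, h,
        show ({1,2,3,4} : Finset (Fin 5))ᶜ = ({0} : Finset (Fin 5)) from by decide,
        show cross ({1,2,3,4} : Finset (Fin 5)) = 3 from by decide,
        show mass f ({1,2,3,4} : Finset (Fin 5)) = 13 from (by simp [mass, Finset.sum_insert, Finset.mem_insert, hf₀, hf₁, hf₂, hf₃, hf₄]; try norm_num),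
        show mass f ({0} : Finset (Fin 5)) = 9 from (by simp [mass, Finset.sum_insert, Finset.mem_insert, hf₀, hf₁, hf₂, hf₃, hf₄]; try norm_num)]
    norm_num [sqrt8]
    try ring
  · refine Or.inr (Or.inr (Or.inr ⟨by rw [typeD_iff P, h]; decide, by rw [typeM_iff P, h]; decide, by rw [typeC_iff P, h]; decide, Or.inl ?_⟩))
    rw [energy_eq f hf₀ hf₁ hf₂ hf₃ hf₄ g hg lam P, h,
        show ({0,2,3,4} : Finset (Fin 5))ᶜ = ({1} : Finset (Fin 5)) from by decide,
        show cross ({0,2,3,4} : Finset (Fin 5)) = 3 from by decide,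
        show mass f ({0,2,3,4} : Finset (Fin 5)) = 21 from (by simp [mass, Finset.sum_insert, Finset.mem_insert, hf₀, hf₁, hf₂, hf₃, hf₄]; try norm_num),
        show mass f ({1} : Finset (Fin 5)) = 1 from (by simp [mass, Finset.sum_insert, Finset.mem_insert, hf₀, hf₁, hf₂, hf₃, hf₄]; try norm_num)]
    norm_num [sqrt200]
    try ring
  · refine Or.inr (Or.inr (Or.inl ⟨⟨1, by rw [part1_eq P, h]; decide⟩, ?_⟩))
    rw [energy_eq f hf₀ hf₁ hf₂ hf₃ hf₄ g hg lam P, h,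
        show ({0,1,3,4} : Finset (Fin 5))ᶜ = ({2} : Finset (Fin 5)) from by decide,
        show cross ({0,1,3,4} : Finset (Fin 5)) = 3 from by decide,
        show mass f ({0,1,3,4} : Finset (Fin 5)) = 13 from (by simp [mass, Finset.sum_insert, Finset.mem_insert, hf₀, hf₁, hf₂, hf₃, hf₄]; try norm_num),
        show mass f ({2} : Finset (Fin 5)) = 9 from (by simp [mass, Finset.sum_insert, Finset.mem_insert, hf₀, hf₁, hf₂, hf₃, hf₄]; try norm_num)]
    norm_num [sqrt8]
    try ring
  · refine Or.inr (Or.inr (Or.inr ⟨by rw [typeD_iff P, h]; decide, by rw [typeM_iff P, h]; decide, by rw [typeC_iff P, h]; decide, Or.inl ?_⟩))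
    rw [energy_eq f hf₀ hf₁ hf₂ hf₃ hf₄ g hg lam P, h,
        show ({0,1,2,4} : Finset (Fin 5))ᶜ = ({3} : Finset (Fin 5)) from by decide,
        show cross ({0,1,2,4} : Finset (Fin 5)) = 3 from by decide,
        show mass f ({0,1,2,4} : Finset (Fin 5)) = 21 from (by simp [mass, Finset.sum_insert, Finset.mem_insert, hf₀, hf₁, hf₂, hf₃, hf₄]; try norm_num),
        show mass f ({3} : Finset (Fin 5)) = 1 from (by simp [mass, Finset.sum_insert, Finset.mem_insert, hf₀, hf₁, hf₂, hf₃, hf₄]; try norm_num)]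
    norm_num [sqrt200]
    try ring
  · refine Or.inr (Or.inl ⟨⟨1, by rw [part1_eq P, h]; decide⟩, ?_⟩)
    rw [energy_eq f hf₀ hf₁ hf₂ hf₃ hf₄ g hg lam P, h,
        show ({2,3,4} : Finset (Fin 5))ᶜ = ({0,1} : Finset (Fin 5)) from by decide,
        show cross ({2,3,4} : Finset (Fin 5)) = 4 from by decide,
        show mass f ({2,3,4} : Finset (Fin 5)) = 12 from (by simp [mass, Finset.sum_insert, Finset.mem_insert, hf₀, hf₁, hf₂, hf₃, hf₄]; try norm_num),
        show mass f ({0,1} : Finset (Fin 5)) = 10 from (by simp [mass, Finset.sum_insert, Finset.mem_insert, hf₀, hf₁, hf₂, hf₃, hf₄]; try norm_num)]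
    norm_num
    try ring
  · refine Or.inr (Or.inl ⟨⟨1, by rw [part1_eq P, h]; decide⟩, ?_⟩)
    rw [energy_eq f hf₀ hf₁ hf₂ hf₃ hf₄ g hg lam P, h,
        show ({0,3,4} : Finset (Fin 5))ᶜ = ({1,2} : Finset (Fin 5)) from by decide,
        show cross ({0,3,4} : Finset (Fin 5)) = 4 from by decide,
        show mass f ({0,3,4} : Finset (Fin 5)) = 12 from (by simp [mass, Finset.sum_insert, Finset.mem_insert, hf₀, hf₁, hf₂, hf₃, hf₄]; try norm_num),
        show mass f ({1,2} : Finset (Fin 5)) = 10 from (by simp [mass, Finset.sum_insert, Finset.mem_insert, hf₀, hf₁, hf₂, hf₃, hf₄]; try norm_num)]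
    norm_num
    try ring
  · refine Or.inr (Or.inl ⟨⟨1, by rw [part1_eq P, h]; decide⟩, ?_⟩)
    rw [energy_eq f hf₀ hf₁ hf₂ hf₃ hf₄ g hg lam P, h,
        show ({0,1,4} : Finset (Fin 5))ᶜ = ({2,3} : Finset (Fin 5)) from by decide,
        show cross ({0,1,4} : Finset (Fin 5)) = 4 from by decide,
        show mass f ({0,1,4} : Finset (Fin 5)) = 12 from (by simp [mass, Finset.sum_insert, Finset.mem_insert, hf₀, hf₁, hf₂, hf₃, hf₄]; try norm_num),
        show mass f ({2,3} : Finset (Fin 5)) = 10 from (by simp [mass, Finset.sum_insert, Finset.mem_insert, hf₀, hf₁, hf₂, hf₃, hf₄]; try norm_num)]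
    norm_num
    try ring
  · refine Or.inr (Or.inl ⟨⟨1, by rw [part1_eq P, h]; decide⟩, ?_⟩)
    rw [energy_eq f hf₀ hf₁ hf₂ hf₃ hf₄ g hg lam P, h,
        show ({1,2,4} : Finset (Fin 5))ᶜ = ({0,3} : Finset (Fin 5)) from by decide,
        show cross ({1,2,4} : Finset (Fin 5)) = 4 from by decide,
        show mass f ({1,2,4} : Finset (Fin 5)) = 12 from (by simp [mass, Finset.sum_insert, Finset.mem_insert, hf₀, hf₁, hf₂, hf₃, hf₄]; try norm_num),
        show mass f ({0,3} : Finset (Fin 5)) = 10 from (by simp [mass, Finset.sum_insert, Finset.mem_insert, hf₀, hf₁, hf₂, hf₃, hf₄]; try norm_num)]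
    norm_num
    try ring
  · refine Or.inr (Or.inr (Or.inr ⟨by rw [typeD_iff P, h]; decide, by rw [typeM_iff P, h]; decide, by rw [typeC_iff P, h]; decide, Or.inr (Or.inl ?_)⟩))
    rw [energy_eq f hf₀ hf₁ hf₂ hf₃ hf₄ g hg lam P, h,
        show ({3,4} : Finset (Fin 5))ᶜ = ({0,1,2} : Finset (Fin 5)) from by decide,
        show cross ({3,4} : Finset (Fin 5)) = 5 from by decide,
        show mass f ({3,4} : Finset (Fin 5)) = 3 from (by simp [mass, Finset.sum_insert, Finset.mem_insert, hf₀, hf₁, hf₂, hf₃, hf₄]; try norm_num),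
        show mass f ({0,1,2} : Finset (Fin 5)) = 19 from (by simp [mass, Finset.sum_insert, Finset.mem_insert, hf₀, hf₁, hf₂, hf₃, hf₄]; try norm_num)]
    norm_num [sqrt128]
    try ring
  · refine Or.inl ⟨⟨0, by rw [h]; decide⟩, ?_⟩
    rw [energy_eq f hf₀ hf₁ hf₂ hf₃ hf₄ g hg lam P, h,
        show ({0,4} : Finset (Fin 5))ᶜ = ({1,2,3} : Finset (Fin 5)) from by decide,
        show cross ({0,4} : Finset (Fin 5)) = 5 from by decide,
        show mass f ({0,4} : Finset (Fin 5)) = 11 from (by simp [mass, Finset.sum_insert, Finset.mem_insert, hf₀, hf₁, hf₂, hf₃, hf₄]; try norm_num),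
        show mass f ({1,2,3} : Finset (Fin 5)) = 11 from (by simp [mass, Finset.sum_insert, Finset.mem_insert, hf₀, hf₁, hf₂, hf₃, hf₄]; try norm_num)]
    norm_num
    try ring
  · refine Or.inr (Or.inr (Or.inr ⟨by rw [typeD_iff P, h]; decide, by rw [typeM_iff P, h]; decide, by rw [typeC_iff P, h]; decide, Or.inr (Or.inl ?_)⟩))
    rw [energy_eq f hf₀ hf₁ hf₂ hf₃ hf₄ g hg lam P, h,
        show ({1,4} : Finset (Fin 5))ᶜ = ({0,2,3} : Finset (Fin 5)) from by decide,
        show cross ({1,4} : Finset (Fin 5)) = 5 from by decide,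
        show mass f ({1,4} : Finset (Fin 5)) = 3 from (by simp [mass, Finset.sum_insert, Finset.mem_insert, hf₀, hf₁, hf₂, hf₃, hf₄]; try norm_num),
        show mass f ({0,2,3} : Finset (Fin 5)) = 19 from (by simp [mass, Finset.sum_insert, Finset.mem_insert, hf₀, hf₁, hf₂, hf₃, hf₄]; try norm_num)]
    norm_num [sqrt128]
    try ring
  · refine Or.inl ⟨⟨0, by rw [h]; decide⟩, ?_⟩
    rw [energy_eq f hf₀ hf₁ hf₂ hf₃ hf₄ g hg lam P, h,
        show ({2,4} : Finset (Fin 5))ᶜ = ({0,1,3} : Finset (Fin 5)) from by decide,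
        show cross ({2,4} : Finset (Fin 5)) = 5 from by decide,
        show mass f ({2,4} : Finset (Fin 5)) = 11 from (by simp [mass, Finset.sum_insert, Finset.mem_insert, hf₀, hf₁, hf₂, hf₃, hf₄]; try norm_num),
        show mass f ({0,1,3} : Finset (Fin 5)) = 11 from (by simp [mass, Finset.sum_insert, Finset.mem_insert, hf₀, hf₁, hf₂, hf₃, hf₄]; try norm_num)]
    norm_num
    try ring
  · refine Or.inr (Or.inr (Or.inr ⟨by rw [typeD_iff P, h]; decide, by rw [typeM_iff P, h]; decide, by rw [typeC_iff P, h]; decide, Or.inr (Or.inr ?_)⟩))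
    rw [energy_eq f hf₀ hf₁ hf₂ hf₃ hf₄ g hg lam P, h,
        show ({4} : Finset (Fin 5))ᶜ = ({0,1,2,3} : Finset (Fin 5)) from by decide,
        show cross ({4} : Finset (Fin 5)) = 4 from by decide,
        show mass f ({4} : Finset (Fin 5)) = 2 from (by simp [mass, Finset.sum_insert, Finset.mem_insert, hf₀, hf₁, hf₂, hf₃, hf₄]; try norm_num),
        show mass f ({0,1,2,3} : Finset (Fin 5)) = 20 from (by simp [mass, Finset.sum_insert, Finset.mem_insert, hf₀, hf₁, hf₂, hf₃, hf₄]; try norm_num)]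
    norm_num [sqrt162]
    try ring


private lemma DM_excl : ∀ S : Finset (Fin 5),
    (S = {4,0} ∨ S = {4,2} ∨ S = {1,2,3} ∨ S = {0,1,3}) →
    (S = {0,1} ∨ S = {0,3} ∨ S = {2,1} ∨ S = {2,3} ∨
      S = {2,3,4} ∨ S = {1,2,4} ∨ S = {0,3,4} ∨ S = {0,1,4}) → False := by decide

private lemma DC_excl : ∀ S : Finset (Fin 5),
    (S = {4,0} ∨ S = {4,2} ∨ S = {1,2,3} ∨ S = {0,1,3}) →
    (S = {0} ∨ S = {2} ∨ S = {1,2,3,4} ∨ S = {0,1,3,4}) → False := by decide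

private lemma MC_excl : ∀ S : Finset (Fin 5),
    (S = {0,1} ∨ S = {0,3} ∨ S = {2,1} ∨ S = {2,3} ∨
      S = {2,3,4} ∨ S = {1,2,4} ∨ S = {0,3,4} ∨ S = {0,1,4}) →
    (S = {0} ∨ S = {2} ∨ S = {1,2,3,4} ∨ S = {0,1,3,4}) → False := by decide

lemma energy_of_typeD (f : Fin 5 → ℝ) (hf₀ : f 0 = 9) (hf₁ : f 1 = 1) (hf₂ : f 2 = 9)
    (hf₃ : f 3 = 1) (hf₄ : f 4 = 2)
    (g : Sym2 (Fin 5) → ℝ) (hg : ∀ e ∈ wheelGraph5.edgeSet, g e = 1)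
    (lam : ℝ) (P : Partition wheelGraph5 2) (h : typeD P) :
    energy wheelGraph5 f g lam P = 5*lam := by
  rcases energy_val f hf₀ hf₁ hf₂ hf₃ hf₄ g hg lam P with
    ⟨_, hE⟩ | ⟨hM, _⟩ | ⟨hC, _⟩ | ⟨hnD, _, _, _⟩
  · exact hE
  · exact (DM_excl _ ((typeD_iff P).mp h) ((typeM_iff P).mp hM)).elim
  · exact (DC_excl _ ((typeD_iff P).mp h) ((typeC_iff P).mp hC)).elim
  · exact absurd h hnD

lemma energy_of_typeM (f : Fin 5 → ℝ) (hf₀ : f 0 = 9) (hf₁ : f 1 = 1) (hf₂ : f 2 = 9)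
    (hf₃ : f 3 = 1) (hf₄ : f 4 = 2)
    (g : Sym2 (Fin 5) → ℝ) (hg : ∀ e ∈ wheelGraph5.edgeSet, g e = 1)
    (lam : ℝ) (P : Partition wheelGraph5 2) (h : typeM P) :
    energy wheelGraph5 f g lam P = 4*lam + (1-lam)*Real.sqrt 2 := by
  rcases energy_val f hf₀ hf₁ hf₂ hf₃ hf₄ g hg lam P with
    ⟨hD, _⟩ | ⟨_, hE⟩ | ⟨hC, _⟩ | ⟨_, hnM, _, _⟩
  · exact (DM_excl _ ((typeD_iff P).mp hD) ((typeM_iff P).mp h)).elim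
  · exact hE
  · exact (MC_excl _ ((typeM_iff P).mp h) ((typeC_iff P).mp hC)).elim
  · exact absurd h hnM

lemma energy_of_typeC (f : Fin 5 → ℝ) (hf₀ : f 0 = 9) (hf₁ : f 1 = 1) (hf₂ : f 2 = 9)
    (hf₃ : f 3 = 1) (hf₄ : f 4 = 2)
    (g : Sym2 (Fin 5) → ℝ) (hg : ∀ e ∈ wheelGraph5.edgeSet, g e = 1)
    (lam : ℝ) (P : Partition wheelGraph5 2) (h : typeC P) :
    energy wheelGraph5 f g lam P = 3*lam + (1-lam)*(2*Real.sqrt 2) := by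
  rcases energy_val f hf₀ hf₁ hf₂ hf₃ hf₄ g hg lam P with
    ⟨hD, _⟩ | ⟨hM, _⟩ | ⟨_, hE⟩ | ⟨_, _, hnC, _⟩
  · exact (DC_excl _ ((typeD_iff P).mp hD) ((typeC_iff P).mp h)).elim
  · exact (MC_excl _ ((typeM_iff P).mp hM) ((typeC_iff P).mp h)).elim
  · exact hE
  · exact absurd h hnC

/-- A concrete partition of type `D`. -/
def QD : Partition wheelGraph5 2 where
  part := ![{4,0}, {1,2,3}]
  disj := by
    intro k l hkl
    rcases fin2_cases k with rfl | rfl <;> rcases fin2_cases l with rfl | rfl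
    · exact absurd rfl hkl
    · exact Finset.disjoint_left.mpr (by decide)
    · exact Finset.disjoint_left.mpr (by decide)
    · exact absurd rfl hkl
  covers := by decide
  connected := by
    intro k
    rcases fin2_cases k with rfl | rfl
    · rw [SimpleGraph.connected_iff]
      exact ⟨by decide, ⟨⟨4, Finset.mem_coe.mpr (by decide)⟩⟩⟩
    · rw [SimpleGraph.connected_iff]
      exact ⟨by decide, ⟨⟨1, Finset.mem_coe.mpr (by decide)⟩⟩⟩

lemma typeD_QD : typeD QD := ⟨0, Or.inl (by decide)⟩

/-- A concrete partition of type `C`. -/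
def QC : Partition wheelGraph5 2 where
  part := ![{0}, {1,2,3,4}]
  disj := by
    intro k l hkl
    rcases fin2_cases k with rfl | rfl <;> rcases fin2_cases l with rfl | rfl
    · exact absurd rfl hkl
    · exact Finset.disjoint_left.mpr (by decide)
    · exact Finset.disjoint_left.mpr (by decide)
    · exact absurd rfl hkl
  covers := by decide
  connected := by
    intro k
    rcases fin2_cases k with rfl | rfl
    · rw [SimpleGraph.connected_iff]
      exact ⟨by decide, ⟨⟨0, Finset.mem_coe.mpr (by decide)⟩⟩⟩
    · rw [SimpleGraph.connected_iff]
      exact ⟨by decide, ⟨⟨4, Finset.mem_coe.mpr (by decide)⟩⟩⟩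

lemma typeC_QC : typeC QC := ⟨0, Or.inl (by decide)⟩

private lemma sqrt2_sq : Real.sqrt 2 ^ 2 = 2 := Real.sq_sqrt (by norm_num)

private lemma one_lt_sqrt2 : 1 < Real.sqrt 2 := by
  nlinarith [sqrt2_sq, Real.sqrt_nonneg 2]

private lemma sqrt2_lt_two : Real.sqrt 2 < 2 := by
  nlinarith [sqrt2_sq, Real.sqrt_nonneg 2, sq_nonneg (Real.sqrt 2 - 2)]


/-- Example `+-vertex`, graph `Γ`: with vertex weights
`f(a) = f(a') = 9`, `f(b) = f(b') = 1`, `f(c) = 2` and unit edge weights, the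
minimal `2`-partitions are exactly those of type `D` for `λ ∈ [0, 2-√2)`, all of
types `D`, `M`, `C` at `λ = 2-√2`, and exactly those of type `C` for
`λ ∈ (2-√2, 1)`. -/
theorem wheel5_minimal_partitions
    (f : Fin 5 → ℝ) (hf₀ : f 0 = 9) (hf₁ : f 1 = 1) (hf₂ : f 2 = 9)
    (hf₃ : f 3 = 1) (hf₄ : f 4 = 2)
    (g : Sym2 (Fin 5) → ℝ) (hg : ∀ e ∈ wheelGraph5.edgeSet, g e = 1) :
    (∀ lam : ℝ, 0 ≤ lam → lam < 2 - Real.sqrt 2 →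
      ∀ P : Partition wheelGraph5 2,
        (∀ Q : Partition wheelGraph5 2,
            energy wheelGraph5 f g lam P ≤ energy wheelGraph5 f g lam Q) ↔
          typeD P) ∧
      (∀ P : Partition wheelGraph5 2, typeD P ∨ typeM P ∨ typeC P →
        ∀ Q : Partition wheelGraph5 2,
          energy wheelGraph5 f g (2 - Real.sqrt 2) P
            ≤ energy wheelGraph5 f g (2 - Real.sqrt 2) Q) ∧
      (∀ lam : ℝ, 2 - Real.sqrt 2 < lam → lam < 1 →
        ∀ P : Partition wheelGraph5 2,
          (∀ Q : Partition wheelGraph5 2,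
              energy wheelGraph5 f g lam P ≤ energy wheelGraph5 f g lam Q) ↔
            typeC P) := by
  have hs2 := sqrt2_sq
  have hs1 := one_lt_sqrt2
  have hsl := sqrt2_lt_two
  have hsnn := Real.sqrt_nonneg 2
  refine ⟨?_, ?_, ?_⟩
  · -- regime λ ∈ [0, 2-√2)
    intro lam h0 hlt P
    have hkey : (0:ℝ) < (2 - Real.sqrt 2 - lam) * (1 + Real.sqrt 2) :=
      mul_pos (by linarith) (by positivity)
    constructor
    · intro hmin
      by_contra hnD
      have hQD := hmin QD
      rw [energy_of_typeD f hf₀ hf₁ hf₂ hf₃ hf₄ g hg lam QD typeD_QD] at hQD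
      rcases energy_val f hf₀ hf₁ hf₂ hf₃ hf₄ g hg lam P with
        ⟨hD, _⟩ | ⟨_, hE⟩ | ⟨_, hE⟩ | ⟨_, _, _, hE | hE | hE⟩
      · exact hnD hD
      · rw [hE] at hQD; nlinarith
      · rw [hE] at hQD; nlinarith
      · rw [hE] at hQD; nlinarith
      · rw [hE] at hQD; nlinarith
      · rw [hE] at hQD; nlinarith
    · intro hD Q
      rw [energy_of_typeD f hf₀ hf₁ hf₂ hf₃ hf₄ g hg lam P hD]
      rcases energy_val f hf₀ hf₁ hf₂ hf₃ hf₄ g hg lam Q with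
        ⟨_, hE⟩ | ⟨_, hE⟩ | ⟨_, hE⟩ | ⟨_, _, _, hE | hE | hE⟩ <;> rw [hE] <;> nlinarith
  · -- regime λ = 2-√2
    intro P hP Q
    have hEP : energy wheelGraph5 f g (2 - Real.sqrt 2) P = 5 * (2 - Real.sqrt 2) := by
      rcases hP with hP | hP | hP
      · exact energy_of_typeD f hf₀ hf₁ hf₂ hf₃ hf₄ g hg _ P hP
      · rw [energy_of_typeM f hf₀ hf₁ hf₂ hf₃ hf₄ g hg _ P hP]
        linear_combination sqrt2_sq
      · rw [energy_of_typeC f hf₀ hf₁ hf₂ hf₃ hf₄ g hg _ P hP]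
        linear_combination 2 * sqrt2_sq
    rw [hEP]
    have hkey : (0:ℝ) ≤ Real.sqrt 2 * (1 - (2 - Real.sqrt 2)) :=
      mul_nonneg hsnn (by nlinarith)
    rcases energy_val f hf₀ hf₁ hf₂ hf₃ hf₄ g hg (2 - Real.sqrt 2) Q with
      ⟨_, hE⟩ | ⟨_, hE⟩ | ⟨_, hE⟩ | ⟨_, _, _, hE | hE | hE⟩ <;> rw [hE] <;> nlinarith
  · -- regime λ ∈ (2-√2, 1)
    intro lam hgt hlt1 P
    have h0 : (0:ℝ) < lam := by nlinarith
    have hkey : (0:ℝ) < (lam - (2 - Real.sqrt 2)) * (1 + Real.sqrt 2) :=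
      mul_pos (by linarith) (by positivity)
    have hkey2 : (0:ℝ) < Real.sqrt 2 * (1 - lam) :=
      mul_pos (by nlinarith) (by linarith)
    constructor
    · intro hmin
      by_contra hnC
      have hQC := hmin QC
      rw [energy_of_typeC f hf₀ hf₁ hf₂ hf₃ hf₄ g hg lam QC typeC_QC] at hQC
      rcases energy_val f hf₀ hf₁ hf₂ hf₃ hf₄ g hg lam P with
        ⟨_, hE⟩ | ⟨_, hE⟩ | ⟨hC, _⟩ | ⟨_, _, _, hE | hE | hE⟩
      · rw [hE] at hQC; nlinarith
      · rw [hE] at hQC; nlinarith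
      · exact hnC hC
      · rw [hE] at hQC; nlinarith
      · rw [hE] at hQC; nlinarith
      · rw [hE] at hQC; nlinarith
    · intro hC Q
      rw [energy_of_typeC f hf₀ hf₁ hf₂ hf₃ hf₄ g hg lam P hC]
      rcases energy_val f hf₀ hf₁ hf₂ hf₃ hf₄ g hg lam Q with
        ⟨_, hE⟩ | ⟨_, hE⟩ | ⟨_, hE⟩ | ⟨_, _, _, hE | hE | hE⟩ <;> rw [hE] <;> nlinarith

end Districting
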